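/- Let Λ₈ ⊂ ℂ² be the additive subgroup generated over ℤ by (1,1), (1,−1), (i−1,0), (0,i−1), and let a : ℂ² → ℂ² be the linear map (z₁,z₂) ↦ (i z₁, −i z₂). Then a maps Λ₈ bijectively onto itself, and the set of points of the quotient group ℂ²/Λ₈ fixed by the induced map ā consists of exactly the four classes of (0,0), (1,0), ((1+i)/2, (1+i)/2) and ((1+i)/2, (i−1)/2); in particular ā has exactly 4 fixed points. -/

import Mathlib

/-- The lattice `Λ₈ ⊂ ℂ²` generated over `ℤ` by `(1,1)`, `(1,-1)`, `(i-1,0)`, `(0,i-1)`. -/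
noncomputable def Lambda8 : AddSubgroup (ℂ × ℂ) :=
  AddSubgroup.closure
    {(1, 1), (1, -1), (Complex.I - 1, 0), (0, Complex.I - 1)}

/-- The linear map `a(z₁,z₂) = (i z₁, -i z₂)`. -/
noncomputable def amap : ℂ × ℂ → ℂ × ℂ := fun z => (Complex.I * z.1, -Complex.I * z.2)

open Complex

lemma mem_lambda8_iff (w : ℂ × ℂ) :
    w ∈ Lambda8 ↔ ∃ a b c d : ℤ,
      w.1.re = a + b - c ∧ w.1.im = c ∧ w.2.re = a - b - d ∧ w.2.im = d := by
  constructor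
  · intro hw
    induction hw using AddSubgroup.closure_induction with
    | mem x hx =>
      simp only [Set.mem_insert_iff, Set.mem_singleton_iff] at hx
      rcases hx with rfl | rfl | rfl | rfl
      · exact ⟨1, 0, 0, 0, by norm_num⟩
      · exact ⟨0, 1, 0, 0, by norm_num⟩
      · exact ⟨0, 0, 1, 0, by norm_num⟩
      · exact ⟨0, 0, 0, 1, by norm_num⟩
    | zero => exact ⟨0, 0, 0, 0, by norm_num⟩
    | add x y hx hy ihx ihy =>
      obtain ⟨a1, b1, c1, d1, h1, h2, h3, h4⟩ := ihx
      obtain ⟨a2, b2, c2, d2, g1, g2, g3, g4⟩ := ihy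
      exact ⟨a1 + a2, b1 + b2, c1 + c2, d1 + d2, by
        simp only [Prod.fst_add, Prod.snd_add, Complex.add_re, Complex.add_im,
          h1, h2, h3, h4, g1, g2, g3, g4]
        push_cast
        refine ⟨by ring, by ring, by ring, by ring⟩⟩
    | neg x hx ihx =>
      obtain ⟨a1, b1, c1, d1, h1, h2, h3, h4⟩ := ihx
      exact ⟨-a1, -b1, -c1, -d1, by
        simp only [Prod.fst_neg, Prod.snd_neg, Complex.neg_re, Complex.neg_im,
          h1, h2, h3, h4]
        push_cast
        refine ⟨by ring, by ring, by ring, by ring⟩⟩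
  · rintro ⟨a, b, c, d, h1, h2, h3, h4⟩
    have g1 : ((1 : ℂ), (1 : ℂ)) ∈ Lambda8 := AddSubgroup.subset_closure (by simp)
    have g2 : ((1 : ℂ), (-1 : ℂ)) ∈ Lambda8 := AddSubgroup.subset_closure (by simp)
    have g3 : ((Complex.I - 1 : ℂ), (0 : ℂ)) ∈ Lambda8 := AddSubgroup.subset_closure (by simp)
    have g4 : ((0 : ℂ), (Complex.I - 1 : ℂ)) ∈ Lambda8 := AddSubgroup.subset_closure (by simp)
    have hmem : a • ((1 : ℂ), (1 : ℂ)) + b • ((1 : ℂ), (-1 : ℂ))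
        + c • ((Complex.I - 1 : ℂ), (0 : ℂ)) + d • ((0 : ℂ), (Complex.I - 1 : ℂ)) ∈ Lambda8 :=
      AddSubgroup.add_mem _ (AddSubgroup.add_mem _ (AddSubgroup.add_mem _
        (AddSubgroup.zsmul_mem _ g1 a) (AddSubgroup.zsmul_mem _ g2 b))
        (AddSubgroup.zsmul_mem _ g3 c)) (AddSubgroup.zsmul_mem _ g4 d)
    have hw : w = a • ((1 : ℂ), (1 : ℂ)) + b • ((1 : ℂ), (-1 : ℂ))
        + c • ((Complex.I - 1 : ℂ), (0 : ℂ)) + d • ((0 : ℂ), (Complex.I - 1 : ℂ)) := by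
      have : w = (w.1, w.2) := rfl
      rw [this]
      simp only [Prod.smul_mk, Prod.mk_add_mk, Prod.mk.injEq, zsmul_eq_mul]
      constructor <;> apply Complex.ext <;>
        simp [h1, h2, h3, h4] <;> push_cast <;> ring
    rw [hw]; exact hmem

lemma amap_bijOn : Set.BijOn amap (Lambda8 : Set (ℂ × ℂ)) (Lambda8 : Set (ℂ × ℂ)) := by
  refine ⟨?_, ?_, ?_⟩
  · intro w hw
    rw [SetLike.mem_coe, mem_lambda8_iff] at hw ⊢
    obtain ⟨a, b, c, d, h1, h2, h3, h4⟩ := hw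
    refine ⟨b - c + d, a - c - d, a + b - c, b - a + d, ?_, ?_, ?_, ?_⟩ <;>
      simp [amap, Complex.mul_re, Complex.mul_im, h1, h2, h3, h4] <;> push_cast <;> ring
  · intro x _ y _ h
    have h1 : Complex.I * x.1 = Complex.I * y.1 := congrArg Prod.fst h
    have h2 : -Complex.I * x.2 = -Complex.I * y.2 := congrArg Prod.snd h
    have e1 : x.1 = y.1 := mul_left_cancel₀ Complex.I_ne_zero h1
    have e2 : x.2 = y.2 := by
      have := mul_left_cancel₀ (neg_ne_zero.mpr Complex.I_ne_zero) h2
      exact this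
    exact Prod.ext e1 e2
  · intro w hw
    rw [SetLike.mem_coe, mem_lambda8_iff] at hw
    obtain ⟨a, b, c, d, h1, h2, h3, h4⟩ := hw
    refine ⟨(-Complex.I * w.1, Complex.I * w.2), ?_, ?_⟩
    · rw [SetLike.mem_coe, mem_lambda8_iff]
      refine ⟨c - b - d, c - a + d, c - a - b, a - b - d, ?_, ?_, ?_, ?_⟩ <;>
        simp [Complex.mul_re, Complex.mul_im, h1, h2, h3, h4] <;> push_cast <;> ring
    · simp only [amap]
      refine Prod.ext ?_ ?_ <;> simp <;> ring_nf <;>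
        simp [Complex.I_sq]

lemma not_mem_half (w : ℂ × ℂ) (hw : w.1.im = 1 / 2 ∨ w.1.im = -(1 / 2)) :
    w ∉ Lambda8 := by
  intro h
  rw [mem_lambda8_iff] at h
  obtain ⟨a, b, c, d, h1, h2, h3, h4⟩ := h
  rcases hw with hw | hw <;> rw [hw] at h2
  · have : (2 * c : ℤ) = 1 := by exact_mod_cast (by linarith : (2 : ℝ) * (c : ℝ) = 1)
    omega
  · have : (2 * c : ℤ) = -1 := by exact_mod_cast (by linarith : (2 : ℝ) * (c : ℝ) = -1)
    omega

lemma not_mem_10 : ((1 : ℂ), (0 : ℂ)) ∉ Lambda8 := by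
  intro h
  rw [mem_lambda8_iff] at h
  obtain ⟨a, b, c, d, h1, h2, h3, h4⟩ := h
  norm_num at h1 h2 h3 h4
  have e1 : ((1 : ℤ) : ℝ) = a + b - c := by push_cast; linarith
  have e2 : ((c : ℤ) : ℝ) = 0 := by linarith
  have e3 : ((0 : ℤ) : ℝ) = a - b - d := by push_cast; linarith
  have e4 : ((d : ℤ) : ℝ) = 0 := by linarith
  have := e1; have := e2; have := e3; have := e4
  have f1 : (1 : ℤ) = a + b - c := by exact_mod_cast e1
  have f2 : c = 0 := by exact_mod_cast e2
  have f3 : (0 : ℤ) = a - b - d := by exact_mod_cast e3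
  have f4 : d = 0 := by exact_mod_cast e4
  omega

lemma not_mem_01 : ((0 : ℂ), (1 : ℂ)) ∉ Lambda8 := by
  intro h
  rw [mem_lambda8_iff] at h
  obtain ⟨a, b, c, d, h1, h2, h3, h4⟩ := h
  norm_num at h1 h2 h3 h4
  have e1 : ((0 : ℤ) : ℝ) = a + b - c := by push_cast; linarith
  have e2 : ((c : ℤ) : ℝ) = 0 := by linarith
  have e3 : ((1 : ℤ) : ℝ) = a - b - d := by push_cast; linarith
  have e4 : ((d : ℤ) : ℝ) = 0 := by linarith
  have f1 : (0 : ℤ) = a + b - c := by exact_mod_cast e1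
  have f2 : c = 0 := by exact_mod_cast e2
  have f3 : (1 : ℤ) = a - b - d := by exact_mod_cast e3
  have f4 : d = 0 := by exact_mod_cast e4
  omega

lemma fixed_set_eq :
    {x : (ℂ × ℂ) ⧸ Lambda8 |
        ∃ z : ℂ × ℂ, (QuotientAddGroup.mk z : (ℂ × ℂ) ⧸ Lambda8) = x ∧ amap z - z ∈ Lambda8} =
      {QuotientAddGroup.mk (0, 0), QuotientAddGroup.mk (1, 0),
        QuotientAddGroup.mk ((1 + Complex.I) / 2, (1 + Complex.I) / 2),
        QuotientAddGroup.mk ((1 + Complex.I) / 2, (Complex.I - 1) / 2)} := by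
  ext x
  simp only [Set.mem_setOf_eq, Set.mem_insert_iff, Set.mem_singleton_iff]
  constructor
  · rintro ⟨z, rfl, hz⟩
    rw [mem_lambda8_iff] at hz
    obtain ⟨a, b, c, d, h1, h2, h3, h4⟩ := hz
    simp only [amap, Prod.fst_sub, Prod.snd_sub, Complex.sub_re, Complex.sub_im,
      Complex.mul_re, Complex.mul_im, Complex.I_re, Complex.I_im, Complex.neg_re,
      Complex.neg_im, zero_mul, one_mul, zero_sub, zero_add, neg_neg, neg_mul] at h1 h2 h3 h4
    have hp : z.1.re = (c : ℝ) - ((a : ℝ) + b) / 2 := by linarith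
    have hq : z.1.im = -((a : ℝ) + b) / 2 := by linarith
    have hr : z.2.re = -((a : ℝ) - b) / 2 := by linarith
    have hs : z.2.im = ((a : ℝ) - b) / 2 - d := by linarith
    rcases Int.even_or_odd (a + b) with ⟨m, hm⟩ | ⟨m, hm⟩
    · -- a + b even, hence a - b even
      obtain ⟨n, hn⟩ : ∃ n, a - b = 2 * n := ⟨(a - b) / 2, by omega⟩
      have hm' : (a : ℝ) + b = 2 * m := by exact_mod_cast congrArg (Int.cast : ℤ → ℝ) (by omega : a + b = 2 * m)
      have hn' : (a : ℝ) - b = 2 * n := by exact_mod_cast congrArg (Int.cast : ℤ → ℝ) hn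
      rcases Int.even_or_odd (c + d) with ⟨k, hk⟩ | ⟨k, hk⟩
      · left
        rw [QuotientAddGroup.eq, mem_lambda8_iff]
        have hk' : (c : ℝ) + d = 2 * k := by exact_mod_cast congrArg (Int.cast : ℤ → ℝ) (by omega : c + d = 2 * k)
        refine ⟨m + d - k, m - k, m, d - n, ?_, ?_, ?_, ?_⟩ <;>
          simp only [Prod.fst_add, Prod.snd_add, Prod.fst_neg, Prod.snd_neg,
            Complex.add_re, Complex.add_im, Complex.neg_re, Complex.neg_im,
            Complex.zero_re, Complex.zero_im, hp, hq, hr, hs] <;> push_cast <;> linarith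
      · right; left
        rw [QuotientAddGroup.eq, mem_lambda8_iff]
        have hk' : (c : ℝ) + d = 2 * k + 1 := by exact_mod_cast congrArg (Int.cast : ℤ → ℝ) hk
        refine ⟨m + d - k, m - k, m, d - n, ?_, ?_, ?_, ?_⟩ <;>
          simp only [Prod.fst_add, Prod.snd_add, Prod.fst_neg, Prod.snd_neg,
            Complex.add_re, Complex.add_im, Complex.neg_re, Complex.neg_im,
            Complex.zero_re, Complex.zero_im, Complex.one_re, Complex.one_im,
            hp, hq, hr, hs] <;> push_cast <;> linarith
    · -- a + b odd
      obtain ⟨n, hn⟩ : ∃ n, a - b = 2 * n + 1 := ⟨(a - b - 1) / 2, by omega⟩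
      have hm' : (a : ℝ) + b = 2 * m + 1 := by exact_mod_cast congrArg (Int.cast : ℤ → ℝ) hm
      have hn' : (a : ℝ) - b = 2 * n + 1 := by exact_mod_cast congrArg (Int.cast : ℤ → ℝ) hn
      rcases Int.even_or_odd (c + d) with ⟨k, hk⟩ | ⟨k, hk⟩
      · right; right; right
        rw [QuotientAddGroup.eq, mem_lambda8_iff]
        have hk' : (c : ℝ) + d = 2 * k := by exact_mod_cast congrArg (Int.cast : ℤ → ℝ) (by omega : c + d = 2 * k)
        refine ⟨m + 1 + d - k, m + 1 - k, m + 1, d - n, ?_, ?_, ?_, ?_⟩ <;>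
          simp only [Prod.fst_add, Prod.snd_add, Prod.fst_neg, Prod.snd_neg,
            Complex.add_re, Complex.add_im, Complex.neg_re, Complex.neg_im,
            Complex.div_re, Complex.div_im, Complex.sub_re, Complex.sub_im,
            Complex.one_re, Complex.one_im, Complex.I_re, Complex.I_im,
            hp, hq, hr, hs] <;> push_cast <;> norm_num <;> linarith
      · right; right; left
        rw [QuotientAddGroup.eq, mem_lambda8_iff]
        have hk' : (c : ℝ) + d = 2 * k + 1 := by exact_mod_cast congrArg (Int.cast : ℤ → ℝ) hk
        refine ⟨m + 1 + d - k, m - k, m + 1, d - n, ?_, ?_, ?_, ?_⟩ <;>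
          simp only [Prod.fst_add, Prod.snd_add, Prod.fst_neg, Prod.snd_neg,
            Complex.add_re, Complex.add_im, Complex.neg_re, Complex.neg_im,
            Complex.div_re, Complex.div_im, Complex.sub_re, Complex.sub_im,
            Complex.one_re, Complex.one_im, Complex.I_re, Complex.I_im,
            hp, hq, hr, hs] <;> push_cast <;> norm_num <;> linarith
  · rintro (rfl | rfl | rfl | rfl)
    · exact ⟨(0, 0), rfl, by rw [mem_lambda8_iff]; exact ⟨0, 0, 0, 0, by norm_num [amap]⟩⟩
    · exact ⟨(1, 0), rfl, by rw [mem_lambda8_iff]; exact ⟨0, 0, 1, 0, by norm_num [amap]⟩⟩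
    · exact ⟨((1 + Complex.I) / 2, (1 + Complex.I) / 2), rfl, by
        rw [mem_lambda8_iff]
        exact ⟨-1, 0, 0, -1, by norm_num [amap, Complex.div_re, Complex.div_im,
          Complex.mul_re, Complex.mul_im, Complex.normSq_apply]⟩⟩
    · exact ⟨((1 + Complex.I) / 2, (Complex.I - 1) / 2), rfl, by
        rw [mem_lambda8_iff]
        exact ⟨0, -1, 0, 0, by norm_num [amap, Complex.div_re, Complex.div_im,
          Complex.mul_re, Complex.mul_im, Complex.normSq_apply]⟩⟩

noncomputable abbrev q0 : (ℂ × ℂ) ⧸ Lambda8 := QuotientAddGroup.mk (0, 0)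
noncomputable abbrev q1 : (ℂ × ℂ) ⧸ Lambda8 := QuotientAddGroup.mk (1, 0)
noncomputable abbrev q2 : (ℂ × ℂ) ⧸ Lambda8 :=
  QuotientAddGroup.mk ((1 + Complex.I) / 2, (1 + Complex.I) / 2)
noncomputable abbrev q3 : (ℂ × ℂ) ⧸ Lambda8 :=
  QuotientAddGroup.mk ((1 + Complex.I) / 2, (Complex.I - 1) / 2)

lemma ne01 : q0 ≠ q1 := by
  intro h
  rw [QuotientAddGroup.eq] at h
  apply not_mem_10
  simpa using h

lemma ne02 : q0 ≠ q2 := by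
  intro h
  rw [QuotientAddGroup.eq] at h
  exact not_mem_half _ (Or.inl (by norm_num)) h

lemma ne03 : q0 ≠ q3 := by
  intro h
  rw [QuotientAddGroup.eq] at h
  exact not_mem_half _ (Or.inl (by norm_num)) h

lemma ne12 : q1 ≠ q2 := by
  intro h
  rw [QuotientAddGroup.eq] at h
  exact not_mem_half _ (Or.inl (by norm_num)) h

lemma ne13 : q1 ≠ q3 := by
  intro h
  rw [QuotientAddGroup.eq] at h
  exact not_mem_half _ (Or.inl (by norm_num)) h

lemma ne23 : q2 ≠ q3 := by
  intro h
  rw [QuotientAddGroup.eq] at h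
  apply not_mem_01
  have := neg_mem h
  have e : -(-((1 + Complex.I) / 2, (1 + Complex.I) / 2) +
      ((1 + Complex.I) / 2, (Complex.I - 1) / 2)) = ((0 : ℂ), (1 : ℂ)) := by
    simp [Prod.ext_iff]
    ring
  rwa [e] at this

lemma card4 : Set.ncard ({q0, q1, q2, q3} : Set ((ℂ × ℂ) ⧸ Lambda8)) = 4 := by
  rw [Set.ncard_insert_of_notMem (by simp [ne01, ne02, ne03]),
    Set.ncard_insert_of_notMem (by simp [ne12, ne13]),
    Set.ncard_pair ne23]

/-- `a` maps `Λ₈` bijectively onto itself, and the fixed points of the induced map on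
`ℂ²/Λ₈` are exactly the classes of `(0,0)`, `(1,0)`, `((1+i)/2,(1+i)/2)`,
`((1+i)/2,(i-1)/2)`; in particular there are exactly 4 of them. -/
theorem stmt_11 :
    Set.BijOn amap (Lambda8 : Set (ℂ × ℂ)) (Lambda8 : Set (ℂ × ℂ)) ∧
    {x : (ℂ × ℂ) ⧸ Lambda8 |
        ∃ z : ℂ × ℂ, (QuotientAddGroup.mk z : (ℂ × ℂ) ⧸ Lambda8) = x ∧ amap z - z ∈ Lambda8} =
      {QuotientAddGroup.mk (0, 0), QuotientAddGroup.mk (1, 0),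
        QuotientAddGroup.mk ((1 + Complex.I) / 2, (1 + Complex.I) / 2),
        QuotientAddGroup.mk ((1 + Complex.I) / 2, (Complex.I - 1) / 2)} ∧
    Nat.card
      {x : (ℂ × ℂ) ⧸ Lambda8 //
        ∃ z : ℂ × ℂ, (QuotientAddGroup.mk z : (ℂ × ℂ) ⧸ Lambda8) = x ∧ amap z - z ∈ Lambda8} =
      4 := by
  refine ⟨amap_bijOn, fixed_set_eq, ?_⟩
  have e : {x : (ℂ × ℂ) ⧸ Lambda8 //
      ∃ z : ℂ × ℂ, (QuotientAddGroup.mk z : (ℂ × ℂ) ⧸ Lambda8) = x ∧ amap z - z ∈ Lambda8} ≃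
      ({q0, q1, q2, q3} : Set ((ℂ × ℂ) ⧸ Lambda8)) := Equiv.setCongr fixed_set_eq
  rw [Nat.card_congr e, Nat.card_coe_set_eq, card4]
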